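/- Let B be an m × n matrix with entries in {+1, -1}, where m ≤ n. Then det(B·Bᵀ) ≤ n^m, with equality if and only if the rows of B are pairwise orthogonal. Consequently (by the Cauchy–Binet formula), the sum of det(M)² over all m × m submatrices M of B obtained by choosing m of the n columns is at most n^m. -/

import Mathlib

open Matrix

section Aux
open Equiv Equiv.Perm Finset Function Matrix

variable {R : Type*} [CommRing R] {m n : ℕ}

local notation "ε " σ:arg => ((sign σ : ℤ) : R)

/-- vanishing for non-injective column choices -/
theorem cb_aux {M : Matrix (Fin m) (Fin n) R} {N : Matrix (Fin n) (Fin m) R}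
    {p : Fin m → Fin n} (H : ¬Injective p) :
    (∑ σ : Perm (Fin m), ε σ * ∏ x, M (σ x) (p x) * N (p x) x) = 0 := by
  obtain ⟨i, j, hpij, hij⟩ : ∃ i j, p i = p j ∧ i ≠ j := by
    rw [Injective] at H
    push_neg at H
    obtain ⟨i, j, h1, h2⟩ := H
    exact ⟨i, j, h1, h2⟩
  exact
    sum_involution (fun σ _ => σ * Equiv.swap i j)
      (fun σ _ => by
        have : (∏ x, M (σ x) (p x)) = ∏ x, M ((σ * Equiv.swap i j) x) (p x) :=
          Fintype.prod_equiv (swap i j) _ _ (by simp [apply_swap_eq_self hpij])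
        simp [this, sign_swap hij, -sign_swap', prod_mul_distrib])
      (fun σ _ _ => (not_congr mul_swap_eq_iff).mpr hij) (fun _ _ => mem_univ _) fun σ _ =>
      mul_swap_involutive i j σ

theorem perm_sum_eq (M N : Matrix (Fin m) (Fin m) R) :
    ∑ τ : Perm (Fin m), ∑ σ : Perm (Fin m), ε σ * ∏ i, M (σ i) (τ i) * N (τ i) i
      = det M * det N := by
  calc
    ∑ τ : Perm (Fin m), ∑ σ : Perm (Fin m), ε σ * ∏ i, M (σ i) (τ i) * N (τ i) i
        = ∑ p : Fin m → Fin m with Bijective p,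
            ∑ σ : Perm (Fin m), ε σ * ∏ i, M (σ i) (p i) * N (p i) i :=
      (sum_bij (fun (p : Fin m → Fin m) h ↦ Equiv.ofBijective p (mem_filter.1 h).2)
        (fun _ _ ↦ mem_univ _)
        (fun _ _ _ _ h ↦ by injection h)
        (fun b _ ↦ ⟨b, mem_filter.2 ⟨mem_univ _, b.bijective⟩, coe_fn_injective rfl⟩)
        fun _ _ ↦ rfl).symm
    _ = ∑ p : Fin m → Fin m, ∑ σ : Perm (Fin m), ε σ * ∏ i, M (σ i) (p i) * N (p i) i := by
      refine sum_subset (filter_subset _ _) fun f _ hbij ↦ cb_aux ?_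
      simp only [mem_filter, mem_univ, true_and] at hbij
      rw [← Finite.injective_iff_bijective] at hbij
      exact hbij
    _ = det (M * N) := by
      rw [Finset.sum_comm]
      symm
      simp only [det_apply', Matrix.mul_apply, prod_univ_sum, mul_sum, Fintype.piFinset_univ]
    _ = det M * det N := det_mul M N

theorem strictMonoPerm_bij (m n : ℕ) :
    Function.Bijective (fun x : {g : Fin m → Fin n // StrictMono g} × Equiv.Perm (Fin m) =>
      (⟨x.1.1 ∘ x.2, x.1.2.injective.comp x.2.injective⟩ :
        {p : Fin m → Fin n // Injective p})) := by
  constructor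
  · rintro ⟨⟨g, hg⟩, τ⟩ ⟨⟨g', hg'⟩, τ'⟩ h
    simp only [Subtype.mk.injEq] at h
    set s0 : Finset (Fin n) := Finset.univ.image (g ∘ τ) with hs0
    have hc0 : s0.card = m := by
      rw [hs0, Finset.card_image_of_injective _ (hg.injective.comp τ.injective),
        Finset.card_univ, Fintype.card_fin]
    have hmg : ∀ x, g x ∈ s0 := fun x => by
      rw [hs0]
      exact Finset.mem_image.2 ⟨τ.symm x, Finset.mem_univ _, by simp⟩
    have hmg' : ∀ x, g' x ∈ s0 := fun x => by
      rw [hs0, h]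
      exact Finset.mem_image.2 ⟨τ'.symm x, Finset.mem_univ _, by simp⟩
    have hgg : g = g' := by
      rw [Finset.orderEmbOfFin_unique hc0 hmg hg, Finset.orderEmbOfFin_unique hc0 hmg' hg']
    subst hgg
    have hτ : τ = τ' := Equiv.ext fun i => hg.injective (congrFun h i)
    simp [hτ]
  · rintro ⟨p, hp⟩
    set s : Finset (Fin n) := Finset.univ.image p with hs
    have hcard : s.card = m := by
      rw [hs, Finset.card_image_of_injective _ hp, Finset.card_univ, Fintype.card_fin]
    set g : Fin m → Fin n := fun i => s.orderEmbOfFin hcard i with hgdef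
    have hg : StrictMono g := (s.orderEmbOfFin hcard).strictMono
    have hmem : ∀ i, p i ∈ s := fun i => Finset.mem_image_of_mem p (Finset.mem_univ i)
    set u : Fin m → Fin m := fun i => (s.orderIsoOfFin hcard).symm ⟨p i, hmem i⟩ with hu
    have hui : Function.Injective u := fun i j hij => by
      apply hp
      have h2 := congrArg (fun x => ((s.orderIsoOfFin hcard) x : Fin n)) hij
      simpa [hu] using h2
    have hub : Function.Bijective u := Finite.injective_iff_bijective.1 hui
    refine ⟨⟨⟨g, hg⟩, Equiv.ofBijective u hub⟩, Subtype.ext (funext fun i => ?_)⟩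
    show g (u i) = p i
    rw [hgdef]
    simp only [hu]
    rw [← Finset.coe_orderIsoOfFin_apply]
    simp

variable {R : Type*} [CommRing R] {m n : ℕ}

local notation "ε " σ:arg => ((sign σ : ℤ) : R)

theorem cauchy_binet (M : Matrix (Fin m) (Fin n) R) (N : Matrix (Fin n) (Fin m) R) :
    det (M * N) = ∑ g : {g : Fin m → Fin n // StrictMono g},
      det (M.submatrix id g.1) * det (N.submatrix g.1 id) := by
  calc det (M * N)
      = ∑ p : Fin m → Fin n, ∑ σ : Perm (Fin m), ε σ * ∏ i, M (σ i) (p i) * N (p i) i := by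
        rw [det_apply']
        simp only [Matrix.mul_apply, prod_univ_sum, mul_sum, Fintype.piFinset_univ]
        exact Finset.sum_comm
    _ = ∑ p : Fin m → Fin n with Injective p,
          ∑ σ : Perm (Fin m), ε σ * ∏ i, M (σ i) (p i) * N (p i) i :=
        (sum_subset (filter_subset _ _) fun p _ hp =>
          cb_aux (by simpa using hp)).symm
    _ = ∑ p : {p : Fin m → Fin n // Injective p},
          ∑ σ : Perm (Fin m), ε σ * ∏ i, M (σ i) (p.1 i) * N (p.1 i) i :=
        (Finset.sum_subtype _ (by simp) _)
    _ = ∑ x : {g : Fin m → Fin n // StrictMono g} × Equiv.Perm (Fin m),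
          ∑ σ : Perm (Fin m), ε σ * ∏ i, M (σ i) (x.1.1 (x.2 i)) * N (x.1.1 (x.2 i)) i :=
        (Fintype.sum_bijective _ (strictMonoPerm_bij m n) _ _ fun x => rfl).symm
    _ = ∑ g : {g : Fin m → Fin n // StrictMono g}, ∑ τ : Perm (Fin m),
          ∑ σ : Perm (Fin m), ε σ * ∏ i, M (σ i) (g.1 (τ i)) * N (g.1 (τ i)) i :=
        by rw [Fintype.sum_prod_type]
    _ = ∑ g : {g : Fin m → Fin n // StrictMono g},
          det (M.submatrix id g.1) * det (N.submatrix g.1 id) :=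
        Finset.sum_congr rfl fun g _ => perm_sum_eq (M.submatrix id g.1) (N.submatrix g.1 id)


theorem amgm_aux {k : ℕ} (hk : 0 < k) (x : Fin k → ℝ) (h0 : ∀ i, 0 ≤ x i)
    {c : ℝ} (hc : 0 < c) (hsum : ∑ i, x i = k * c) :
    ∏ i, x i ≤ c ^ k ∧ ((∃ i, x i ≠ c) → ∏ i, x i < c ^ k) := by
  by_cases hz : ∃ i, x i = 0
  · obtain ⟨i, hi⟩ := hz
    have hp : ∏ i, x i = 0 := Finset.prod_eq_zero (Finset.mem_univ i) hi
    have : (0:ℝ) < c ^ k := pow_pos hc k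
    exact ⟨hp ▸ this.le, fun _ => hp ▸ this⟩
  · push_neg at hz
    have hpos : ∀ i, 0 < x i := fun i => lt_of_le_of_ne (h0 i) (Ne.symm (hz i))
    have hw : ∑ _i : Fin k, (1 / (k:ℝ)) = 1 := by
      rw [Finset.sum_const, Finset.card_univ, Fintype.card_fin, nsmul_eq_mul]
      field_simp
    have hmean : ∑ i, (1 / (k:ℝ)) • x i = c := by
      rw [← Finset.smul_sum, hsum, smul_eq_mul]
      field_simp
    have hmem : ∀ i ∈ Finset.univ, x i ∈ Set.Ioi (0:ℝ) := fun i _ => hpos i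
    have hprodpos : (0:ℝ) < ∏ i, x i := Finset.prod_pos fun i _ => hpos i
    have key : ∀ (h : ∑ i, (1 / (k:ℝ)) • Real.log (x i) ≤ Real.log c),
        ∏ i, x i ≤ c ^ k := by
      intro h
      have h2 : ∑ i, Real.log (x i) ≤ k * Real.log c := by
        have := mul_le_mul_of_nonneg_left h (le_of_lt (Nat.cast_pos.2 hk : (0:ℝ) < k))
        rw [Finset.mul_sum] at this
        calc ∑ i, Real.log (x i) = ∑ i, (k:ℝ) * ((1/(k:ℝ)) • Real.log (x i)) := by
              refine Finset.sum_congr rfl fun i _ => ?_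
              rw [smul_eq_mul]
              field_simp
          _ ≤ (k:ℝ) * Real.log c := this
      have h3 : Real.log (∏ i, x i) ≤ Real.log (c ^ k) := by
        rw [Real.log_prod fun i _ => (hpos i).ne', Real.log_pow]
        exact h2
      exact (Real.log_le_log_iff hprodpos (pow_pos hc k)).1 h3
    constructor
    · apply key
      calc ∑ i, (1 / (k:ℝ)) • Real.log (x i)
          ≤ Real.log (∑ i, (1 / (k:ℝ)) • x i) :=
            (strictConcaveOn_log_Ioi.concaveOn).le_map_sum
              (fun i _ => by positivity) hw hmem
        _ = Real.log c := by rw [hmean]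
    · intro hne
      obtain ⟨i0, hi0⟩ := hne
      have hpair : ∃ j ∈ Finset.univ (α := Fin k), ∃ l ∈ Finset.univ, x j ≠ x l := by
        by_contra hcon
        push_neg at hcon
        have hall : ∀ j, x j = x i0 := fun j =>
          hcon j (Finset.mem_univ j) i0 (Finset.mem_univ i0)
        have : ∑ i, x i = k * x i0 := by
          rw [Finset.sum_congr rfl fun j _ => hall j, Finset.sum_const, Finset.card_univ,
            Fintype.card_fin, nsmul_eq_mul]
        rw [hsum] at this
        exact hi0 (mul_left_cancel₀ (Nat.cast_pos.2 hk).ne' this.symm)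
      have hlt : ∑ i, (1 / (k:ℝ)) • Real.log (x i) < Real.log c := by
        calc ∑ i, (1 / (k:ℝ)) • Real.log (x i)
            < Real.log (∑ i, (1 / (k:ℝ)) • x i) :=
              strictConcaveOn_log_Ioi.lt_map_sum (fun i _ => by positivity) hw hmem hpair
          _ = Real.log c := by rw [hmean]
      have h2 : ∑ i, Real.log (x i) < k * Real.log c := by
        have := mul_lt_mul_of_pos_left hlt (Nat.cast_pos.2 hk : (0:ℝ) < k)
        rw [Finset.mul_sum] at this
        calc ∑ i, Real.log (x i) = ∑ i, (k:ℝ) * ((1/(k:ℝ)) • Real.log (x i)) := by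
              refine Finset.sum_congr rfl fun i _ => ?_
              rw [smul_eq_mul]
              field_simp
          _ < (k:ℝ) * Real.log c := this
      have h3 : Real.log (∏ i, x i) < Real.log (c ^ k) := by
        rw [Real.log_prod fun i _ => (hpos i).ne', Real.log_pow]
        exact h2
      exact (Real.log_lt_log_iff hprodpos (pow_pos hc k)).1 h3

theorem main_bound (m n : ℕ) (hm : 0 < m) (hn : 0 < n)
    (B : Matrix (Fin m) (Fin n) ℤ) (hB : ∀ i j, B i j = 1 ∨ B i j = -1) :
    (B * Bᵀ).det ≤ (n : ℤ) ^ m ∧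
      ((∃ i j, i ≠ j ∧ ∑ k, B i k * B j k ≠ 0) → (B * Bᵀ).det < (n : ℤ) ^ m) := by
  set G : Matrix (Fin m) (Fin m) ℤ := B * Bᵀ with hG
  set A : Matrix (Fin m) (Fin m) ℝ := G.map (Int.cast) with hA
  have hGij : ∀ i j, G i j = ∑ k, B i k * B j k := by
    intro i j; simp [hG, Matrix.mul_apply]
  have hGdiag : ∀ i, G i i = (n : ℤ) := by
    intro i
    rw [hGij]
    calc ∑ k, B i k * B i k = ∑ _k : Fin n, (1:ℤ) := by
          refine Finset.sum_congr rfl fun k _ => ?_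
          rcases hB i k with h | h <;> rw [h] <;> norm_num
      _ = n := by simp
  have hA1 : A = (B.map (Int.cast : ℤ → ℝ)) * (B.map (Int.cast : ℤ → ℝ))ᵀ := by
    ext i j
    simp [hA, hG, Matrix.mul_apply, Matrix.map_apply]
  have hPSD : A.PosSemidef := by
    rw [hA1]
    have := Matrix.posSemidef_self_mul_conjTranspose (B.map (Int.cast : ℤ → ℝ))
    rwa [Matrix.conjTranspose_eq_transpose_of_trivial] at this
  have hHerm : A.IsHermitian := hPSD.1
  set lam : Fin m → ℝ := hHerm.eigenvalues with hlam
  have hl0 : ∀ i, 0 ≤ lam i := fun i => hPSD.eigenvalues_nonneg i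
  have hdetA : A.det = ∏ i, lam i := by simpa using hHerm.det_eq_prod_eigenvalues
  set U : Matrix (Fin m) (Fin m) ℝ := (hHerm.eigenvectorUnitary : Matrix (Fin m) (Fin m) ℝ)
    with hU
  have hUU : star U * U = 1 := Matrix.mem_unitaryGroup_iff'.mp (hHerm.eigenvectorUnitary).2
  have hsp : A = U * Matrix.diagonal (RCLike.ofReal ∘ lam) * star U := hHerm.spectral_theorem
  have htrace : ∑ i, lam i = (m : ℝ) * n := by
    have t1 : A.trace = (m : ℝ) * n := by
      have : ∀ i, A i i = (n : ℝ) := fun i => by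
        simp [hA, Matrix.map_apply, hGdiag i]
      simp [Matrix.trace, Matrix.diag, this]
    have t2 : A.trace = ∑ i, lam i := by
      calc A.trace = (U * Matrix.diagonal (RCLike.ofReal ∘ lam) * star U).trace := by
            rw [← hsp]
        _ = (star U * U * Matrix.diagonal (RCLike.ofReal ∘ lam)).trace := by
            rw [Matrix.trace_mul_cycle]
        _ = (Matrix.diagonal (RCLike.ofReal ∘ lam)).trace := by rw [hUU, one_mul]
        _ = ∑ i, lam i := by simp [Matrix.trace_diagonal]
    rw [← t2, t1]
  have hamgm := amgm_aux hm lam hl0 (by exact_mod_cast hn : (0:ℝ) < (n:ℝ)) htrace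
  have hcast : ((G.det : ℤ) : ℝ) = A.det := by
    rw [hA]
    exact (RingHom.map_det (Int.castRingHom ℝ) G)
  constructor
  · have : A.det ≤ (n : ℝ) ^ m := hdetA ▸ hamgm.1
    rw [← hcast] at this
    exact_mod_cast this
  · intro ⟨i, j, hij, hne⟩
    have hex : ∃ i, lam i ≠ (n : ℝ) := by
      by_contra hcon
      push_neg at hcon
      have hD : Matrix.diagonal (RCLike.ofReal ∘ lam) = ((n : ℝ) • 1 : Matrix (Fin m) (Fin m) ℝ) := by
        ext a b
        by_cases hab : a = b
        · subst hab; simp [Matrix.diagonal, hcon a]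
        · simp [Matrix.diagonal_apply_ne _ hab, Matrix.one_apply_ne hab, hab]
      have hAid : A = (n : ℝ) • 1 := by
        rw [hsp, hD, mul_smul_comm, smul_mul_assoc, mul_one,
          Matrix.mem_unitaryGroup_iff.mp (hHerm.eigenvectorUnitary).2]
      have : A i j = 0 := by
        rw [hAid]
        simp [Matrix.one_apply_ne hij]
      rw [hA] at this
      simp only [Matrix.map_apply] at this
      rw [hGij i j] at this
      exact_mod_cast hne (by exact_mod_cast this)
    have : A.det < (n : ℝ) ^ m := hdetA ▸ hamgm.2 hex
    rw [← hcast] at this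
    exact_mod_cast this
end Aux
/-- For an `m × n` `{±1}`-matrix `B` with `m ≤ n`: `det (B * Bᵀ) ≤ n^m`, with
equality iff the rows of `B` are pairwise orthogonal; consequently the sum of
`det(M)^2` over all `m × m` submatrices `M` of `B` obtained by choosing `m` of
the `n` columns (strictly monotone column maps) is at most `n^m`. -/
theorem det_gram_le_and_sum_sq_minors_le (m n : ℕ) (hmn : m ≤ n)
    (B : Matrix (Fin m) (Fin n) ℤ) (hB : ∀ i j, B i j = 1 ∨ B i j = -1) :
    (B * Bᵀ).det ≤ (n : ℤ) ^ m ∧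
    ((B * Bᵀ).det = (n : ℤ) ^ m ↔
      ∀ i j : Fin m, i ≠ j → ∑ k, B i k * B j k = 0) ∧
    ∑ g : {g : Fin m → Fin n // StrictMono g},
      (B.submatrix id g.1).det ^ 2 ≤ (n : ℤ) ^ m := by
  have hGij : ∀ i j, (B * Bᵀ) i j = ∑ k, B i k * B j k := by
    intro i j; simp [Matrix.mul_apply]
  have hGdiag : ∀ i, (B * Bᵀ) i i = (n : ℤ) := by
    intro i
    rw [hGij]
    calc ∑ k, B i k * B i k = ∑ _k : Fin n, (1:ℤ) := by
          refine Finset.sum_congr rfl fun k _ => ?_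
          rcases hB i k with h | h <;> rw [h] <;> norm_num
      _ = n := by simp
  have hmain : (B * Bᵀ).det ≤ (n : ℤ) ^ m ∧
      ((B * Bᵀ).det = (n : ℤ) ^ m ↔
        ∀ i j : Fin m, i ≠ j → ∑ k, B i k * B j k = 0) := by
    rcases Nat.eq_zero_or_pos m with hm | hm
    · subst hm
      have hdet : (B * Bᵀ).det = 1 := Matrix.det_isEmpty
      refine ⟨by rw [hdet, pow_zero], ?_⟩
      constructor
      · intro _ i
        exact i.elim0
      · intro _
        rw [hdet, pow_zero]
    · have hn : 0 < n := lt_of_lt_of_le hm hmn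
      obtain ⟨hle, hstrict⟩ := main_bound m n hm hn B hB
      refine ⟨hle, ?_, ?_⟩
      · intro hdet
        by_contra h
        push_neg at h
        obtain ⟨i, j, hij, hne⟩ := h
        exact absurd hdet (ne_of_lt (hstrict ⟨i, j, hij, hne⟩))
      · intro horth
        have hdiag : B * Bᵀ = Matrix.diagonal (fun _ => (n : ℤ)) := by
          ext a b
          by_cases hab : a = b
          · subst hab; rw [hGdiag, Matrix.diagonal_apply_eq]
          · rw [Matrix.diagonal_apply_ne _ hab, hGij]
            exact horth a b hab
        rw [hdiag, Matrix.det_diagonal, Finset.prod_const, Finset.card_univ,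
          Fintype.card_fin]
  refine ⟨hmain.1, hmain.2, ?_⟩
  have hcb : (B * Bᵀ).det = ∑ g : {g : Fin m → Fin n // StrictMono g},
      (B.submatrix id g.1).det ^ 2 := by
    rw [cauchy_binet B Bᵀ]
    refine Finset.sum_congr rfl fun g _ => ?_
    rw [show Bᵀ.submatrix g.1 id = (B.submatrix id g.1)ᵀ from rfl, Matrix.det_transpose,
      pow_two]
  rw [← hcb]
  exact hmain.1
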